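/- Let σ : U → X be a local homeomorphism on an open subset U of a locally compact Hausdorff space X, and let U_n be the domain of σⁿ (defined by U_0 = X, U_{n+1} = {x ∈ U_n : σⁿ(x) ∈ U}). For n, m ∈ ℕ, ξ₁, η₁ ∈ C_c(U_n), ξ₂, η₂ ∈ C_c(U_m), define ξ(x) = ξ₁(x)·ξ₂(σⁿ(x)) and η(x) = η₁(x)·η₂(σⁿ(x)) on U_{n+m}, and define ⟨ξ,η⟩_n(x) = ∑_{σⁿ(y)=x} conj(ξ(y))·η(y). Then ⟨ξ₂, ⟨ξ₁,η₁⟩_n · η₂⟩_m = ⟨ξ, η⟩_{n+m}. -/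

import Mathlib

open Function Set

/-- `Un σ U n` is the domain of the `n`-th iterate `σⁿ` of the partially defined
map `σ : U → X` (modelled as a total map together with its domain `U`). -/
def Un {X : Type*} (σ : X → X) (U : Set X) (n : ℕ) : Set X :=
  {x | ∀ j < n, σ^[j] x ∈ U}

/-- The "inner product" `⟨ξ,η⟩_n (x) = ∑_{σⁿ(y)=x} conj (ξ y) * η y`
(a finite sum in the situations of interest, formalized via `finsum`). -/
noncomputable def ipn {X : Type*} (σ : X → X) (n : ℕ) (ξ η : X → ℂ) (x : X) : ℂ :=
  ∑ᶠ y ∈ {y | σ^[n] y = x}, (starRingEnd ℂ) (ξ y) * η y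

section aux

variable {X : Type*} [TopologicalSpace X] {U : Set X} {σ : X → X}

lemma mem_Un_succ {n : ℕ} {x : X} :
    x ∈ Un σ U (n + 1) ↔ x ∈ U ∧ σ x ∈ Un σ U n := by
  constructor
  · intro h
    refine ⟨h 0 (Nat.succ_pos n), fun j hj => ?_⟩
    have := h (j + 1) (by omega)
    rwa [Function.iterate_succ_apply] at this
  · rintro ⟨h0, h⟩ j hj
    cases j with
    | zero => exact h0
    | succ k => rw [Function.iterate_succ_apply]; exact h k (by omega)

lemma Un_mapsTo {n : ℕ} : MapsTo σ (Un σ U (n + 1)) (Un σ U n) :=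
  fun _ hx => (mem_Un_succ.mp hx).2

lemma Un_subset_U {n : ℕ} : Un σ U (n + 1) ⊆ U := fun _ hx => (mem_Un_succ.mp hx).1

lemma iterate_isLocalHomeomorphOn (hσ : IsLocalHomeomorphOn σ U) (n : ℕ) :
    IsLocalHomeomorphOn (σ^[n]) (Un σ U n) := by
  induction n with
  | zero =>
    intro x _
    exact ⟨OpenPartialHomeomorph.refl X, Set.mem_univ x, rfl⟩
  | succ n ih =>
    rw [Function.iterate_succ]
    exact ih.comp (hσ.mono Un_subset_U) Un_mapsTo

/-- The fiber of a point under a map which is a local homeomorphism on `s`, intersected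
with a compact subset of `s`, is finite. -/
lemma finite_fiber_inter {f : X → X} {s : Set X} (hf : IsLocalHomeomorphOn f s)
    {K : Set X} (hK : IsCompact K) (hKs : K ⊆ s) (x : X) :
    {y | y ∈ K ∧ f y = x}.Finite := by
  classical
  haveI : Nonempty (OpenPartialHomeomorph X X) := ⟨OpenPartialHomeomorph.refl X⟩
  choose! e he hfe using hf
  obtain ⟨t, htK, hcover⟩ := hK.elim_nhds_subcover (fun y => (e y).source)
    (fun y hy => ((e y).open_source.mem_nhds (he y (hKs hy))))
  have hsub : {y | y ∈ K ∧ f y = x} ⊆ ⋃ y ∈ t, {z | z ∈ (e y).source ∧ f z = x} := by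
    rintro z ⟨hzK, hzx⟩
    obtain ⟨y, hyt, hyz⟩ := Set.mem_iUnion₂.mp (hcover hzK)
    exact Set.mem_iUnion₂.mpr ⟨y, hyt, hyz, hzx⟩
  refine Set.Finite.subset (Set.Finite.biUnion t.finite_toSet fun y hy => ?_) hsub
  apply Set.Subsingleton.finite
  rintro a ⟨ha1, ha2⟩ b ⟨hb1, hb2⟩
  have hys : y ∈ s := hKs (htK y hy)
  refine (e y).injOn ha1 hb1 ?_
  rw [← hfe y hys, ha2, hb2]

end aux

/-- `⟨ξ₂, ⟨ξ₁,η₁⟩_n · η₂⟩_m = ⟨ξ, η⟩_{n+m}` where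
`ξ(x) = ξ₁(x)·ξ₂(σⁿ(x))` and `η(x) = η₁(x)·η₂(σⁿ(x))`. -/
theorem stmt1 {X : Type*} [TopologicalSpace X] [LocallyCompactSpace X] [T2Space X]
    {U : Set X} (hU : IsOpen U) {σ : X → X} (hσ : IsLocalHomeomorphOn σ U)
    (n m : ℕ) (ξ₁ η₁ ξ₂ η₂ : X → ℂ)
    (h₁c : Continuous ξ₁) (h₁s : HasCompactSupport ξ₁) (h₁U : tsupport ξ₁ ⊆ Un σ U n)
    (h₂c : Continuous η₁) (h₂s : HasCompactSupport η₁) (h₂U : tsupport η₁ ⊆ Un σ U n)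
    (h₃c : Continuous ξ₂) (h₃s : HasCompactSupport ξ₂) (h₃U : tsupport ξ₂ ⊆ Un σ U m)
    (h₄c : Continuous η₂) (h₄s : HasCompactSupport η₂) (h₄U : tsupport η₂ ⊆ Un σ U m) :
    ipn σ m ξ₂ (fun y => ipn σ n ξ₁ η₁ y * η₂ y) =
      ipn σ (n + m) (fun x => ξ₁ x * ξ₂ (σ^[n] x)) (fun x => η₁ x * η₂ (σ^[n] x)) := by
  classical
  funext x
  -- finiteness of the relevant fibers
  have hT : {z | z ∈ tsupport ξ₂ ∧ σ^[m] z = x}.Finite :=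
    finite_fiber_inter (iterate_isLocalHomeomorphOn hσ m) h₃s h₃U x
  set T : Finset X := hT.toFinset with hTdef
  have hs : ∀ z : X, {y | y ∈ tsupport ξ₁ ∧ σ^[n] y = z}.Finite := fun z =>
    finite_fiber_inter (iterate_isLocalHomeomorphOn hσ n) h₁s h₁U z
  set sf : X → Finset X := fun z => (hs z).toFinset with hsfdef
  have hmemT : ∀ z, z ∈ T ↔ z ∈ tsupport ξ₂ ∧ σ^[m] z = x := fun z => by
    rw [hTdef, Set.Finite.mem_toFinset]; rfl
  have hmemsf : ∀ z y, y ∈ sf z ↔ y ∈ tsupport ξ₁ ∧ σ^[n] y = z := fun z y => by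
    rw [hsfdef, Set.Finite.mem_toFinset]; rfl
  -- the inner sums as finite sums
  have hinner : ∀ z, ipn σ n ξ₁ η₁ z = ∑ y ∈ sf z, (starRingEnd ℂ) (ξ₁ y) * η₁ y := by
    intro z
    refine finsum_mem_eq_sum_of_subset _ ?_ ?_
    · rintro y ⟨hy1, hy2⟩
      simp only [Function.mem_support] at hy2
      have : ξ₁ y ≠ 0 := fun h => hy2 (by simp [h])
      exact (hmemsf z y).mpr ⟨subset_tsupport _ this, hy1⟩
    · intro y hy
      exact ((hmemsf z y).mp hy).2
  -- the outer sum as a finite sum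
  have houter : ipn σ m ξ₂ (fun z => ipn σ n ξ₁ η₁ z * η₂ z) x
      = ∑ z ∈ T, (starRingEnd ℂ) (ξ₂ z) * (ipn σ n ξ₁ η₁ z * η₂ z) := by
    refine finsum_mem_eq_sum_of_subset _ ?_ ?_
    · rintro z ⟨hz1, hz2⟩
      simp only [Function.mem_support] at hz2
      have : ξ₂ z ≠ 0 := fun h => hz2 (by simp [h])
      exact (hmemT z).mpr ⟨subset_tsupport _ this, hz1⟩
    · intro z hz
      exact ((hmemT z).mp hz).2
  -- the right-hand side as a finite sum
  have hRHS : ipn σ (n + m) (fun x => ξ₁ x * ξ₂ (σ^[n] x)) (fun x => η₁ x * η₂ (σ^[n] x)) x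
      = ∑ y ∈ T.biUnion sf, (starRingEnd ℂ) (ξ₁ y * ξ₂ (σ^[n] y)) * (η₁ y * η₂ (σ^[n] y)) := by
    refine finsum_mem_eq_sum_of_subset _ ?_ ?_
    · rintro y ⟨hy1, hy2⟩
      simp only [Function.mem_support] at hy2
      have hξ1 : ξ₁ y ≠ 0 := fun h => hy2 (by simp [h])
      have hξ2 : ξ₂ (σ^[n] y) ≠ 0 := fun h => hy2 (by simp [h])
      have hz : σ^[m] (σ^[n] y) = x := by
        rw [← Function.iterate_add_apply, add_comm m n]; exact hy1
      exact Finset.mem_coe.mpr (Finset.mem_biUnion.mpr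
        ⟨σ^[n] y, (hmemT _).mpr ⟨subset_tsupport _ hξ2, hz⟩,
          (hmemsf _ _).mpr ⟨subset_tsupport _ hξ1, rfl⟩⟩)
    · intro y hy
      obtain ⟨z, hzT, hyz⟩ := Finset.mem_biUnion.mp (Finset.mem_coe.mp hy)
      have h1 : σ^[n] y = z := ((hmemsf z y).mp hyz).2
      have h2 : σ^[m] z = x := ((hmemT z).mp hzT).2
      show σ^[n + m] y = x
      rw [add_comm, Function.iterate_add_apply, h1, h2]
  rw [houter, hRHS]
  have hdisj : (↑T : Set X).PairwiseDisjoint sf := by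
    intro z₁ _ z₂ _ hne
    rw [Function.onFun, Finset.disjoint_left]
    intro y hy1 hy2
    exact hne (((hmemsf z₁ y).mp hy1).2.symm.trans ((hmemsf z₂ y).mp hy2).2)
  rw [Finset.sum_biUnion hdisj]
  refine Finset.sum_congr rfl fun z hz => ?_
  rw [hinner z, Finset.sum_mul, Finset.mul_sum]
  refine Finset.sum_congr rfl fun y hy => ?_
  rw [((hmemsf z y).mp hy).2, map_mul]
  ring
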